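/- arXiv:1807.00201 — 6 statements merged into one kernel-verified Lean document; each statement's English description precedes it below -/
import Mathlib

section
/- Let k ≥ 4 and n ≥ k. Every edge coloring of the complete graph K_n in which every k-element subset of vertices spans edges of at least (k choose 2) − ⌊k/2⌋ + 2 distinct colors has the property that each color appears on at most ⌊k/2⌋ − 1 edges; consequently the coloring uses at least (n choose 2)/(⌊k/2⌋ − 1) distinct colors in total. -/
open Finset

lemma edges_card {n : ℕ} (S : Finset (Fin n)) :
    (S.sym2.filter (fun e => ¬ e.IsDiag)).card = (S.card).choose 2 := by
  rw [← Sym2.card_image_offDiag S]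
  congr 1
  ext e
  induction e using Sym2.ind with
  | _ a b =>
    simp only [Finset.mem_filter, Finset.mk_mem_sym2_iff, Sym2.mk_isDiag_iff,
      Finset.mem_image, Finset.mem_offDiag, Prod.exists]
    constructor
    · rintro ⟨⟨ha, hb⟩, hab⟩
      exact ⟨a, b, ⟨ha, hb, hab⟩, rfl⟩
    · rintro ⟨x, y, ⟨hx, hy, hxy⟩, h⟩
      rw [Function.uncurry_apply_pair, Sym2.eq_iff] at h
      rcases h with ⟨rfl, rfl⟩ | ⟨rfl, rfl⟩
      · exact ⟨⟨hx, hy⟩, hxy⟩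
      · exact ⟨⟨hy, hx⟩, fun h => hxy h.symm⟩

lemma image_card_le {β γ : Type*} [DecidableEq β] [DecidableEq γ] (T E : Finset β)
    (f : β → γ) (c : γ) (hE : E ⊆ T) (hc : ∀ e ∈ E, f e = c) :
    (T.image f).card ≤ T.card - E.card + 1 := by
  have hsub : T.image f ⊆ insert c ((T \ E).image f) := by
    intro x hx
    obtain ⟨e, he, rfl⟩ := Finset.mem_image.1 hx
    by_cases heE : e ∈ E
    · rw [hc e heE]; exact Finset.mem_insert_self _ _
    · exact Finset.mem_insert_of_mem (Finset.mem_image_of_mem _ (Finset.mem_sdiff.2 ⟨he, heE⟩))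
  calc (T.image f).card ≤ (insert c ((T \ E).image f)).card := Finset.card_le_card hsub
    _ ≤ ((T \ E).image f).card + 1 := Finset.card_insert_le _ _
    _ ≤ (T \ E).card + 1 := by gcongr; exact Finset.card_image_le
    _ = T.card - E.card + 1 := by rw [Finset.card_sdiff_of_subset hE]


/-- The set of colors appearing on edges (non-diagonal unordered pairs) with both
endpoints in `S`, for an edge coloring `col` of the complete graph on `Fin n`. -/
def colorsIn {n : ℕ} {α : Type} [DecidableEq α]
    (col : Sym2 (Fin n) → α) (S : Finset (Fin n)) : Finset α :=
  (S.sym2.filter (fun e => ¬ e.IsDiag)).image col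

/-- The number of edges (non-diagonal unordered pairs) of `K_n` assigned color `c`. -/
def edgeCount {n : ℕ} {α : Type} [DecidableEq α]
    (col : Sym2 (Fin n) → α) (c : α) : ℕ :=
  (Finset.univ.filter (fun e : Sym2 (Fin n) => ¬ e.IsDiag ∧ col e = c)).card

/-- For `k ≥ 4` and `n ≥ k`, in every edge coloring of `K_n` in which every `k`-element
vertex subset spans at least `(k choose 2) - ⌊k/2⌋ + 2` colors, each color appears on at
most `⌊k/2⌋ - 1` edges, and consequently at least `(n choose 2) / (⌊k/2⌋ - 1)` colors are
used in total. -/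
theorem stmt5 (k n : ℕ) (hk : 4 ≤ k) (hn : k ≤ n) (α : Type) [DecidableEq α]
    (col : Sym2 (Fin n) → α)
    (hlocal : ∀ S : Finset (Fin n), S.card = k →
      k.choose 2 - k / 2 + 2 ≤ (colorsIn col S).card) :
    (∀ c : α, edgeCount col c ≤ k / 2 - 1) ∧
      ((n.choose 2 : ℝ) / ((k / 2 : ℕ) - 1 : ℝ) ≤ ((colorsIn col Finset.univ).card : ℝ)) := by
  have hk2 : 2 ≤ k / 2 := by omega
  have part1 : ∀ c : α, edgeCount col c ≤ k / 2 - 1 := by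
    intro c
    by_contra hcon
    have hge : k / 2 ≤ edgeCount col c := by omega
    obtain ⟨E, hEsub, hEcard⟩ := Finset.exists_subset_card_eq hge
    -- vertex set of E
    set f : Sym2 (Fin n) → Finset (Fin n) :=
      Sym2.lift ⟨fun a b => ({a, b} : Finset (Fin n)), fun a b => Finset.pair_comm a b⟩ with hf
    have hfcard : ∀ e : Sym2 (Fin n), (f e).card ≤ 2 := by
      intro e
      induction e using Sym2.ind with
      | _ a b => exact (Finset.card_insert_le _ _).trans (by simp)
    set V : Finset (Fin n) := E.sup f with hV
    have hVcard : V.card ≤ k := by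
      calc V.card ≤ (E.biUnion f).card := by
            rw [hV, Finset.sup_eq_biUnion]
        _ ≤ ∑ e ∈ E, (f e).card := Finset.card_biUnion_le
        _ ≤ ∑ _e ∈ E, 2 := Finset.sum_le_sum (fun e _ => hfcard e)
        _ = (k / 2) * 2 := by rw [Finset.sum_const, hEcard, smul_eq_mul]
        _ ≤ k := Nat.div_mul_le_self k 2
    obtain ⟨S, hVS, hScard⟩ := Finset.exists_superset_card_eq hVcard (by simpa using hn)
    set T := S.sym2.filter (fun e => ¬ e.IsDiag) with hT
    have hET : E ⊆ T := by
      intro e he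
      have hmem := hEsub he
      rw [Finset.mem_filter] at hmem
      rw [hT, Finset.mem_filter]
      refine ⟨?_, hmem.2.1⟩
      induction e using Sym2.ind with
      | _ a b =>
        have hfe : f s(a, b) = {a, b} := rfl
        have hsub : f s(a, b) ⊆ V := Finset.le_sup he
        rw [hfe] at hsub
        rw [Finset.mk_mem_sym2_iff]
        constructor
        · exact hVS (hsub (by simp))
        · exact hVS (hsub (by simp))
    have hcolc : ∀ e ∈ E, col e = c := by
      intro e he
      have := hEsub he
      rw [Finset.mem_filter] at this
      exact this.2.2
    have h1 := hlocal S hScard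
    have h2 : (colorsIn col S).card ≤ T.card - E.card + 1 :=
      image_card_le T E col c hET hcolc
    have h3 : T.card = k.choose 2 := by rw [hT, edges_card, hScard]
    have h4 : k / 2 ≤ k.choose 2 := by
      have : k.choose 2 = k * (k - 1) / 2 := Nat.choose_two_right k
      have h5 : k ≤ k * (k - 1) := Nat.le_mul_of_pos_right k (by omega)
      have := Nat.div_le_div_right (c := 2) h5
      omega
    rw [h3, hEcard] at h2
    omega
  refine ⟨part1, ?_⟩
  -- counting
  set T := (Finset.univ : Finset (Fin n)).sym2.filter (fun e => ¬ e.IsDiag) with hT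
  have hTcard : T.card = n.choose 2 := by
    rw [hT, edges_card, Finset.card_univ, Fintype.card_fin]
  have hcount : T.card ≤ (k / 2 - 1) * (T.image col).card := by
    apply Finset.card_le_mul_card_image
    intro b _
    calc (T.filter (fun e => col e = b)).card
        ≤ (Finset.univ.filter (fun e : Sym2 (Fin n) => ¬ e.IsDiag ∧ col e = b)).card := by
          apply Finset.card_le_card
          intro e he
          simp only [Finset.mem_filter, hT] at he ⊢
          exact ⟨Finset.mem_univ _, he.1.2, he.2⟩
      _ ≤ k / 2 - 1 := part1 b
  have hcolors : colorsIn col Finset.univ = T.image col := rfl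
  rw [hcolors]
  have hd : ((k / 2 : ℕ) - 1 : ℝ) = ((k / 2 - 1 : ℕ) : ℝ) := by
    push_cast [Nat.cast_sub (by omega : 1 ≤ k / 2)]
    ring
  rw [hd, div_le_iff₀ (by exact_mod_cast (by omega : 0 < k / 2 - 1))]
  have h := hcount
  rw [hTcard, mul_comm] at h
  exact_mod_cast h
end

section
/- Let A be a set of n real numbers (n ≥ 4) such that every 4-element subset A' ⊆ A satisfies |D(A')| ≥ 5. Then every positive real number d is realized as a difference d = a − a' with a, a' ∈ A in at most two ways, and consequently |D(A)| ≥ (n choose 2)/2. -/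
/-- The positive difference set of a set `A` of real numbers:
`D(A) = {a - a' : a, a' ∈ A, a > a'}`. -/
def posDiffSet (A : Set ℝ) : Set ℝ :=
  {d : ℝ | ∃ a ∈ A, ∃ a' ∈ A, a' < a ∧ a - a' = d}

/-- Among three reals `x < y < z`, some pair has difference `≠ d`. -/
lemma aux_sorted (d x y z : ℝ) (hd : 0 < d) (h1 : x < y) (h2 : y < z) :
    ∃ u v, (u = x ∨ u = y ∨ u = z) ∧ (v = x ∨ v = y ∨ v = z) ∧ u < v ∧ v - u ≠ d := by
  by_cases h : y - x = d
  · by_cases h' : z - y = d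
    · exact ⟨x, z, Or.inl rfl, Or.inr (Or.inr rfl), h1.trans h2, by intro hc; linarith⟩
    · exact ⟨y, z, Or.inr (Or.inl rfl), Or.inr (Or.inr rfl), h2, h'⟩
  · exact ⟨x, y, Or.inl rfl, Or.inr (Or.inl rfl), h1, h⟩

lemma aux_three (d x y z : ℝ) (hd : 0 < d) (hxy : x ≠ y) (hxz : x ≠ z) (hyz : y ≠ z) :
    ∃ u v, (u = x ∨ u = y ∨ u = z) ∧ (v = x ∨ v = y ∨ v = z) ∧ u < v ∧ v - u ≠ d := by
  rcases lt_trichotomy x y with h1 | h1 | h1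
  · rcases lt_trichotomy y z with h2 | h2 | h2
    · exact aux_sorted d x y z hd h1 h2
    · exact absurd h2 hyz
    · rcases lt_trichotomy x z with h3 | h3 | h3
      · obtain ⟨u, v, hu, hv, h⟩ := aux_sorted d x z y hd h3 h2
        exact ⟨u, v, by tauto, by tauto, h⟩
      · exact absurd h3 hxz
      · obtain ⟨u, v, hu, hv, h⟩ := aux_sorted d z x y hd h3 h1
        exact ⟨u, v, by tauto, by tauto, h⟩
  · exact absurd h1 hxy
  · rcases lt_trichotomy x z with h2 | h2 | h2
    · obtain ⟨u, v, hu, hv, h⟩ := aux_sorted d y x z hd h1 h2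
      exact ⟨u, v, by tauto, by tauto, h⟩
    · exact absurd h2 hxz
    · rcases lt_trichotomy y z with h3 | h3 | h3
      · obtain ⟨u, v, hu, hv, h⟩ := aux_sorted d y z x hd h3 h2
        exact ⟨u, v, by tauto, by tauto, h⟩
      · exact absurd h3 hyz
      · obtain ⟨u, v, hu, hv, h⟩ := aux_sorted d z y x hd h3 h1
        exact ⟨u, v, by tauto, by tauto, h⟩

/-- Let `A` be a set of `n ≥ 4` reals such that every 4-element subset `A'` satisfies
`|D(A')| ≥ 5`. Then every positive real `d` is realized as a difference of elements of `A`
in at most two ways, and consequently `|D(A)| ≥ (n choose 2) / 2`. -/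
theorem stmt6 (n : ℕ) (hn : 4 ≤ n) (A : Finset ℝ) (hA : A.card = n)
    (hlocal : ∀ A' : Finset ℝ, A' ⊆ A → A'.card = 4 → 5 ≤ (posDiffSet ↑A').ncard) :
    (∀ d : ℝ, 0 < d →
      {p : ℝ × ℝ | p.1 ∈ A ∧ p.2 ∈ A ∧ p.2 < p.1 ∧ p.1 - p.2 = d}.ncard ≤ 2) ∧
      ((n.choose 2 : ℝ) / 2 ≤ ((posDiffSet ↑A).ncard : ℝ)) := by
  have key : ∀ d : ℝ, 0 < d →
      {p : ℝ × ℝ | p.1 ∈ A ∧ p.2 ∈ A ∧ p.2 < p.1 ∧ p.1 - p.2 = d}.ncard ≤ 2 := by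
    intro d hd
    set S := {p : ℝ × ℝ | p.1 ∈ A ∧ p.2 ∈ A ∧ p.2 < p.1 ∧ p.1 - p.2 = d} with hS
    have hSfin : S.Finite := by
      apply Set.Finite.subset ((A ×ˢ A).finite_toSet)
      intro p hp
      simp only [Finset.coe_product, Set.mem_prod]
      exact ⟨hp.1, hp.2.1⟩
    by_contra hcon
    push_neg at hcon
    obtain ⟨p1, hp1, p2, hp2, p3, hp3, h12, h13, h23⟩ := (Set.two_lt_ncard hSfin).mp hcon
    -- the second coordinates are distinct
    have fstEq : ∀ p ∈ S, p.1 = p.2 + d := by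
      intro p hp; have := hp.2.2.2; linarith
    have hb12 : p1.2 ≠ p2.2 := by
      intro h; exact h12 (Prod.ext (by rw [fstEq p1 hp1, fstEq p2 hp2, h]) h)
    have hb13 : p1.2 ≠ p3.2 := by
      intro h; exact h13 (Prod.ext (by rw [fstEq p1 hp1, fstEq p3 hp3, h]) h)
    have hb23 : p2.2 ≠ p3.2 := by
      intro h; exact h23 (Prod.ext (by rw [fstEq p2 hp2, fstEq p3 hp3, h]) h)
    obtain ⟨u, v, hu, hv, huv, hne⟩ := aux_three d p1.2 p2.2 p3.2 hd hb12 hb13 hb23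
    have hmem : ∀ w, (w = p1.2 ∨ w = p2.2 ∨ w = p3.2) → w ∈ A ∧ w + d ∈ A := by
      rintro w (rfl | rfl | rfl)
      · exact ⟨hp1.2.1, by rw [← fstEq p1 hp1]; exact hp1.1⟩
      · exact ⟨hp2.2.1, by rw [← fstEq p2 hp2]; exact hp2.1⟩
      · exact ⟨hp3.2.1, by rw [← fstEq p3 hp3]; exact hp3.1⟩
    obtain ⟨huA, hudA⟩ := hmem u hu
    obtain ⟨hvA, hvdA⟩ := hmem v hv
    -- the four-element set
    set A' : Finset ℝ := {u, u + d, v, v + d} with hA'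
    have hsub : A' ⊆ A := by
      intro x hx
      simp only [hA', Finset.mem_insert, Finset.mem_singleton] at hx
      rcases hx with rfl | rfl | rfl | rfl <;> assumption
    have hcard : A'.card = 4 := by
      rw [hA']
      rw [Finset.card_insert_of_notMem, Finset.card_insert_of_notMem,
        Finset.card_insert_of_notMem, Finset.card_singleton]
      · simp only [Finset.mem_singleton]; intro h; linarith
      · simp only [Finset.mem_insert, Finset.mem_singleton]
        push_neg
        constructor
        · intro h; exact hne (by linarith)
        · intro h; linarith
      · simp only [Finset.mem_insert, Finset.mem_singleton]
        push_neg
        refine ⟨by intro h; linarith, by intro h; linarith, by intro h; linarith⟩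
    have h5 := hlocal A' hsub hcard
    have hsubT : posDiffSet ↑A' ⊆ {d, v - u, v + d - u, |u + d - v|} := by
      rintro x ⟨a, ha, a', ha', hlt, rfl⟩
      simp only [hA', Finset.coe_insert, Finset.coe_singleton, Set.mem_insert_iff,
        Set.mem_singleton_iff] at ha ha'
      simp only [Set.mem_insert_iff, Set.mem_singleton_iff]
      rcases ha with rfl | rfl | rfl | rfl <;> rcases ha' with rfl | rfl | rfl | rfl <;>
        first
          | linarith
          | (left; ring1)
          | (right; left; ring1)
          | (right; right; left; ring1)
          | (right; right; right; rw [abs_of_neg (sub_neg.mpr hlt)]; try ring1)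
          | (right; right; right; rw [abs_of_pos (sub_pos.mpr hlt)]; try ring1)
    have hT : ({d, v - u, v + d - u, |u + d - v|} : Set ℝ).ncard ≤ 4 := by
      refine le_trans (Set.ncard_insert_le _ _) ?_
      refine le_trans (Nat.add_le_add_right (Set.ncard_insert_le _ _) 1) ?_
      refine le_trans (Nat.add_le_add_right (Nat.add_le_add_right
        (Set.ncard_insert_le _ _) 1) 1) ?_
      simp [Set.ncard_singleton]
    have := Set.ncard_le_ncard hsubT (by
      apply Set.Finite.insert; apply Set.Finite.insert; apply Set.Finite.insert
      exact Set.finite_singleton _)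
    omega
  refine ⟨key, ?_⟩
  -- counting part
  classical
  set P : Finset (ℝ × ℝ) := (A ×ˢ A).filter (fun p => p.2 < p.1) with hP
  set f : ℝ × ℝ → ℝ := fun p => p.1 - p.2 with hf
  have hDeq : posDiffSet ↑A = ↑(P.image f) := by
    ext x
    simp only [posDiffSet, Set.mem_setOf_eq, Finset.coe_image, Set.mem_image,
      Finset.mem_coe, hP, Finset.mem_filter, Finset.mem_product, hf]
    constructor
    · rintro ⟨a, ha, a', ha', hlt, rfl⟩
      exact ⟨(a, a'), ⟨⟨ha, ha'⟩, hlt⟩, rfl⟩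
    · rintro ⟨⟨a, a'⟩, ⟨⟨ha, ha'⟩, hlt⟩, rfl⟩
      exact ⟨a, ha, a', ha', hlt, rfl⟩
  -- fiber bound
  have hfiber : ∀ b ∈ P.image f, (P.filter (fun p => f p = b)).card ≤ 2 := by
    intro b hb
    obtain ⟨p, hp, rfl⟩ := Finset.mem_image.mp hb
    simp only [hP, Finset.mem_filter, Finset.mem_product] at hp
    have hbpos : 0 < f p := by simp only [hf]; linarith [hp.2]
    have := key (f p) hbpos
    have heq : ↑(P.filter (fun q => f q = f p)) =
        {q : ℝ × ℝ | q.1 ∈ A ∧ q.2 ∈ A ∧ q.2 < q.1 ∧ q.1 - q.2 = f p} := by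
      ext q
      simp only [Finset.coe_filter, Set.mem_setOf_eq, hP, Finset.mem_filter,
        Finset.mem_product, hf]
      tauto
    rw [← heq] at this
    rwa [Set.ncard_coe_finset] at this
  have hPle : P.card ≤ 2 * (P.image f).card := Finset.card_le_mul_card_image P 2 hfiber
  -- P.card counting : 2 * P.card = n*n - n
  have hQ : ((A ×ˢ A).filter (fun p => p.1 < p.2)).card = P.card := by
    refine Finset.card_nbij' Prod.swap Prod.swap ?_ ?_ ?_ ?_
    · intro p hp
      simp only [Finset.mem_coe, hP, Finset.mem_filter, Finset.mem_product, Prod.fst_swap,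
        Prod.snd_swap] at hp ⊢
      exact ⟨⟨hp.1.2, hp.1.1⟩, hp.2⟩
    · intro p hp
      simp only [Finset.mem_coe, hP, Finset.mem_filter, Finset.mem_product, Prod.fst_swap,
        Prod.snd_swap] at hp ⊢
      exact ⟨⟨hp.1.2, hp.1.1⟩, hp.2⟩
    · intro p _; simp
    · intro p _; simp
  have hoff : A.offDiag = P ∪ (A ×ˢ A).filter (fun p => p.1 < p.2) := by
    ext p
    simp only [Finset.mem_offDiag, Finset.mem_union, hP, Finset.mem_filter,
      Finset.mem_product]
    constructor
    · rintro ⟨h1, h2, h3⟩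
      rcases lt_or_gt_of_ne h3 with h | h
      · exact Or.inr ⟨⟨h1, h2⟩, h⟩
      · exact Or.inl ⟨⟨h1, h2⟩, h⟩
    · rintro (⟨⟨h1, h2⟩, h⟩ | ⟨⟨h1, h2⟩, h⟩)
      · exact ⟨h1, h2, ne_of_gt h⟩
      · exact ⟨h1, h2, ne_of_lt h⟩
  have hdisj : Disjoint P ((A ×ˢ A).filter (fun p => p.1 < p.2)) := by
    rw [Finset.disjoint_left]
    intro p hp hq
    simp only [hP, Finset.mem_filter] at hp hq
    exact absurd hq.2 (not_lt_of_gt hp.2)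
  have hoffcard : A.offDiag.card = 2 * P.card := by
    rw [hoff, Finset.card_union_of_disjoint hdisj, hQ]; ring
  have hoffc : A.offDiag.card = n * n - n := by
    rw [Finset.offDiag_card, hA]
  have h2P : 2 * P.card = n * n - n := by omega
  -- combine
  have hchoose : 2 * n.choose 2 ≤ n * n - n := by
    rw [Nat.choose_two_right]
    have h1 : n * (n - 1) / 2 * 2 ≤ n * (n - 1) := Nat.div_mul_le_self _ _
    have h2 : n * (n - 1) = n * n - n := by
      cases n with
      | zero => simp
      | succ m =>
        rw [Nat.succ_sub_one, Nat.mul_succ]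
        omega
    omega
  have hfinal : n.choose 2 ≤ 2 * (P.image f).card := by omega
  rw [hDeq, Set.ncard_coe_finset]
  rw [div_le_iff₀ (by norm_num : (0:ℝ) < 2)]
  calc ((n.choose 2 : ℕ) : ℝ) ≤ ((2 * (P.image f).card : ℕ) : ℝ) := by exact_mod_cast hfinal
    _ = (P.image f).card * 2 := by push_cast; ring
end

section
/- Let a, b ≥ 2 be integers and n ≥ a(b+1). Let G be an edge coloring of K_n such that every a(b+1)-element subset of vertices spans edges of at least (a(b+1) choose 2) − ba + b + 1 distinct colors. Then for every vertex v and every color c, the number of vertices u with c(v,u) = c is at most b(a−1). -/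
open Finset

lemma card_image_le_of_const {β γ : Type} [DecidableEq β] [DecidableEq γ]
    {s t : Finset β} {f : β → γ} {c : γ} (hts : t ⊆ s) (hc : ∀ x ∈ t, f x = c) :
    (s.image f).card ≤ s.card - t.card + 1 := by
  have hsub : s.image f ⊆ insert c ((s \ t).image f) := by
    intro y hy
    obtain ⟨x, hx, rfl⟩ := Finset.mem_image.1 hy
    by_cases hxt : x ∈ t
    · simp [hc x hxt]
    · exact Finset.mem_insert_of_mem (Finset.mem_image.2 ⟨x, Finset.mem_sdiff.2 ⟨hx, hxt⟩, rfl⟩)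
  calc (s.image f).card ≤ (insert c ((s \ t).image f)).card := Finset.card_le_card hsub
    _ ≤ ((s \ t).image f).card + 1 := Finset.card_insert_le _ _
    _ ≤ (s \ t).card + 1 := by gcongr; exact Finset.card_image_le
    _ = s.card - t.card + 1 := by rw [Finset.card_sdiff_of_subset hts]

lemma card_filter_not_isDiag {β : Type} [DecidableEq β] (s : Finset β) :
    (s.sym2.filter (fun e => ¬ e.IsDiag)).card = s.card.choose 2 := by
  have hdiag : s.sym2.filter (fun e => e.IsDiag) = s.image Sym2.diag := by
    ext e
    induction e with
    | _ x y =>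
      simp only [Finset.mem_filter, Finset.mk_mem_sym2_iff, Sym2.mk_isDiag_iff,
        Finset.mem_image]
      constructor
      · rintro ⟨⟨hx, _⟩, rfl⟩; exact ⟨x, hx, rfl⟩
      · rintro ⟨z, hz, h⟩
        rw [Sym2.diag, Sym2.eq_iff] at h
        rcases h with ⟨rfl, rfl⟩ | ⟨rfl, rfl⟩ <;> exact ⟨⟨hz, hz⟩, rfl⟩
  have h1 : (s.sym2.filter (fun e => e.IsDiag)).card = s.card := by
    rw [hdiag, Finset.card_image_of_injective _ Sym2.diag_injective]
  have h2 := Finset.card_filter_add_card_filter_not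
    (s := s.sym2) (p := fun e => e.IsDiag)
  have h3 := Finset.card_sym2 s
  have h4 : (s.card + 1).choose 2 = s.card.choose 1 + s.card.choose 2 :=
    Nat.choose_succ_succ _ _
  simp only [Nat.choose_one_right] at h4
  omega

/-- Let `a, b ≥ 2` and `n ≥ a(b+1)`. In every edge coloring of `K_n` in which every
`a(b+1)`-element vertex subset spans at least `(a(b+1) choose 2) - ba + b + 1` distinct
colors, every vertex `v` and color `c` satisfy: the number of vertices `u` with
`c(v,u) = c` is at most `b(a-1)`. -/
theorem stmt11 (a b n : ℕ) (ha : 2 ≤ a) (hb : 2 ≤ b) (hn : a * (b + 1) ≤ n)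
    (α : Type) [DecidableEq α] (col : Sym2 (Fin n) → α)
    (hlocal : ∀ S : Finset (Fin n), S.card = a * (b + 1) →
      (a * (b + 1)).choose 2 - b * a + b + 1 ≤ (colorsIn col S).card) :
    ∀ (v : Fin n) (c : α),
      (Finset.univ.filter (fun u : Fin n => u ≠ v ∧ col s(v, u) = c)).card ≤ b * (a - 1) := by
  intro v c
  by_contra hcon
  push_neg at hcon
  set N := Finset.univ.filter (fun u : Fin n => u ≠ v ∧ col s(v, u) = c) with hN
  set m := a * (b + 1) with hm
  set t := b * a - b + 1 with ht
  have htN : t ≤ N.card := by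
    have h1 : b * (a - 1) = b * a - b * 1 := Nat.mul_sub b a 1
    omega
  obtain ⟨T, hTN, hTcard⟩ := Finset.exists_subset_card_eq htN
  -- properties of T members
  have hTmem : ∀ u ∈ T, u ≠ v ∧ col s(v, u) = c := by
    intro u hu
    have := hTN hu
    rw [hN, Finset.mem_filter] at this
    exact this.2
  have hvT : v ∉ T := fun h => (hTmem v h).1 rfl
  -- build S
  have hcard1 : (insert v T).card = t + 1 := by
    rw [Finset.card_insert_of_notMem hvT, hTcard]
  have htm : t + 1 ≤ m := by
    have e1 : a * (b + 1) = a * b + a := by ring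
    have e2 : b * a = a * b := Nat.mul_comm b a
    omega
  obtain ⟨S, hTS, hScard⟩ := Finset.exists_superset_card_eq
    (s := insert v T) (by omega : (insert v T).card ≤ m) (by simpa using hn)
  have hvS : v ∈ S := hTS (Finset.mem_insert_self v T)
  -- the edge set
  set E := S.sym2.filter (fun e => ¬ e.IsDiag) with hE
  set T' := T.image (fun u => s(v, u)) with hT'
  have hT'E : T' ⊆ E := by
    intro e he
    obtain ⟨u, hu, rfl⟩ := Finset.mem_image.1 he
    rw [hE, Finset.mem_filter, Finset.mk_mem_sym2_iff, Sym2.mk_isDiag_iff]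
    exact ⟨⟨hvS, hTS (Finset.mem_insert_of_mem hu)⟩, fun h => (hTmem u hu).1 h.symm⟩
  have hT'card : T'.card = t := by
    rw [hT', Finset.card_image_of_injOn, hTcard]
    intro x hx y hy hxy
    rw [Sym2.eq_iff] at hxy
    rcases hxy with ⟨-, h⟩ | ⟨h1, h2⟩
    · exact h
    · exact absurd h2 (hTmem x hx).1
  have hT'col : ∀ e ∈ T', col e = c := by
    intro e he
    obtain ⟨u, hu, rfl⟩ := Finset.mem_image.1 he
    exact (hTmem u hu).2
  have hEcard : E.card = m.choose 2 := by rw [hE, card_filter_not_isDiag, hScard]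
  have hupper : (colorsIn col S).card ≤ m.choose 2 - t + 1 := by
    have := card_image_le_of_const (f := col) (c := c) hT'E hT'col
    rw [hEcard, hT'card] at this
    exact this
  have hlower := hlocal S hScard
  have hC : b * a + b + 1 ≤ m.choose 2 := by
    rw [Nat.choose_two_right]
    rw [Nat.le_div_iff_mul_le (by norm_num)]
    have hm1 : m = a * b + a := by rw [hm]; ring
    nlinarith [Nat.sub_add_cancel (show 1 ≤ m by nlinarith)]
  omega
end

section
/- Let a, b ≥ 2 be integers and n ≥ a(b+1). Let G be an edge coloring of K_n such that every a(b+1)-element subset of vertices spans edges of at least (a(b+1) choose 2) − ba + b + 1 distinct colors. Then every color c appears on at most b(a−1)·n/2 edges of K_n. -/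
open Finset

lemma card_nondiag_sym2 {β : Type} [DecidableEq β] (S : Finset β) :
    (S.sym2.filter (fun e => ¬ e.IsDiag)).card ≤ S.card.choose 2 := by
  have h1 : (S.sym2.filter (fun e => ¬ e.IsDiag)).card
      = S.sym2.card - (S.sym2.filter (fun e => e.IsDiag)).card := by
    have := Finset.card_filter_add_card_filter_not
      (s := S.sym2) (p := fun e : Sym2 β => e.IsDiag)
    omega
  have h2 : S.image Sym2.diag ⊆ S.sym2.filter (fun e => e.IsDiag) := by
    intro e he
    simp only [mem_image] at he
    obtain ⟨x, hx, rfl⟩ := he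
    simp only [mem_filter, Sym2.diag_isDiag, and_true]
    rw [Sym2.diag]
    exact Finset.mk_mem_sym2_iff.2 ⟨hx, hx⟩
  have h3 : S.card ≤ (S.sym2.filter (fun e => e.IsDiag)).card := by
    calc S.card = (S.image Sym2.diag).card :=
          (Finset.card_image_of_injective _ Sym2.diag_injective).symm
      _ ≤ _ := Finset.card_le_card h2
  have h4 : S.sym2.card = (S.card + 1).choose 2 := Finset.card_sym2 S
  have h5 : (S.card + 1).choose 2 = S.card.choose 2 + S.card := by
    rw [Nat.choose_succ_succ, Nat.choose_one_right]; exact Nat.add_comm _ _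
  omega

/-- Let `a, b ≥ 2` and `n ≥ a(b+1)`. In every edge coloring of `K_n` in which every
`a(b+1)`-element vertex subset spans at least `(a(b+1) choose 2) - ba + b + 1` distinct
colors, every color appears on at most `b(a-1)n/2` edges. -/
theorem stmt12 (a b n : ℕ) (ha : 2 ≤ a) (hb : 2 ≤ b) (hn : a * (b + 1) ≤ n)
    (α : Type) [DecidableEq α] (col : Sym2 (Fin n) → α)
    (hlocal : ∀ S : Finset (Fin n), S.card = a * (b + 1) →
      (a * (b + 1)).choose 2 - b * a + b + 1 ≤ (colorsIn col S).card) :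
    ∀ c : α, (edgeCount col c : ℝ) ≤ (b : ℝ) * ((a : ℝ) - 1) * (n : ℝ) / 2 := by
  intro c
  by_contra hgt
  push_neg at hgt
  set E := edgeCount col c with hE
  have hnat : b * (a - 1) * n < 2 * E := by
    have h1 : (b : ℝ) * ((a : ℝ) - 1) * n < 2 * E := by linarith
    have h2 : ((a : ℝ) - 1) = ((a - 1 : ℕ) : ℝ) := by
      rw [Nat.cast_sub (by omega)]; push_cast; ring
    rw [h2] at h1
    exact_mod_cast h1
  -- the graph of color-c edges
  let G : SimpleGraph (Fin n) :=
    { Adj := fun u v => u ≠ v ∧ col s(u, v) = c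
      symm := by
        constructor
        intro u v ⟨h1, h2⟩
        exact ⟨h1.symm, by rwa [Sym2.eq_swap]⟩
      loopless := by constructor; intro u ⟨h1, _⟩; exact h1 rfl }
  haveI : DecidableRel G.Adj := fun u v =>
    inferInstanceAs (Decidable (u ≠ v ∧ col s(u, v) = c))
  have hedge : G.edgeFinset.card = E := by
    rw [hE, edgeCount]
    congr 1
    ext e
    refine Sym2.ind (fun x y => ?_) e
    simp only [SimpleGraph.mem_edgeFinset, SimpleGraph.mem_edgeSet, mem_filter,
      mem_univ, true_and, Sym2.mk_isDiag_iff]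
    exact Iff.rfl
  have hsum : ∑ v, G.degree v = 2 * E := by
    rw [SimpleGraph.sum_degrees_eq_twice_card_edges, hedge]
  -- a vertex of large degree
  have hv : ∃ v : Fin n, b * (a - 1) + 1 ≤ G.degree v := by
    by_contra h
    push_neg at h
    have hle : ∑ v, G.degree v ≤ ∑ _v : Fin n, b * (a - 1) :=
      Finset.sum_le_sum fun v _ => by have := h v; omega
    rw [Finset.sum_const, Finset.card_univ, Fintype.card_fin, smul_eq_mul] at hle
    have : n * (b * (a - 1)) = b * (a - 1) * n := by ring
    omega
  obtain ⟨v, hv⟩ := hv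
  have hdeg : b * (a - 1) + 1 ≤ (G.neighborFinset v).card := by
    rwa [SimpleGraph.card_neighborFinset_eq_degree]
  obtain ⟨T, hTsub, hTcard⟩ := Finset.exists_subset_card_eq hdeg
  have hadj : ∀ u ∈ T, G.Adj v u := fun u hu =>
    (SimpleGraph.mem_neighborFinset _ _ _).1 (hTsub hu)
  have hvT : v ∉ T := fun h => G.loopless.irrefl v (hadj v h)
  have hS0card : (insert v T).card = b * (a - 1) + 2 := by
    rw [Finset.card_insert_of_notMem hvT, hTcard]
  have hmul : b * (a - 1) + b = b * a := by
    obtain ⟨k, rfl⟩ := Nat.exists_eq_add_of_le ha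
    have h1 : 2 + k - 1 = k + 1 := by omega
    rw [h1]; ring
  have hle2 : b * (a - 1) + 2 ≤ a * (b + 1) := by
    have h1 : b * a ≤ a * b := by rw [mul_comm]
    have h2 : a * b ≤ a * (b + 1) := by nlinarith
    omega
  obtain ⟨S, hS0S, -, hScard⟩ :=
    Finset.exists_subsuperset_card_eq (n := a * (b + 1)) (Finset.subset_univ (insert v T))
      (by rw [hS0card]; exact hle2)
      (by rw [Finset.card_univ, Fintype.card_fin]; exact hn)
  -- count edges of color c inside S
  set ES := S.sym2.filter (fun e => ¬ e.IsDiag) with hES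
  have hstar : b * (a - 1) + 1 ≤ (ES.filter (fun e => col e = c)).card := by
    rw [← hTcard]
    apply Finset.card_le_card_of_injOn (fun u => s(v, u))
    · intro u hu
      obtain ⟨hne, hcol⟩ := hadj u hu
      simp only [hES, Finset.mem_coe, mem_filter, Sym2.mk_isDiag_iff]
      refine ⟨⟨Finset.mk_mem_sym2_iff.2 ⟨hS0S (Finset.mem_insert_self v T),
        hS0S (Finset.mem_insert_of_mem hu)⟩, hne⟩, hcol⟩
    · intro u1 _ u2 _ h
      exact Sym2.congr_right.1 h
  -- bound the number of colors in S
  have hcolors : (colorsIn col S).card ≤ (ES.filter (fun e => col e ≠ c)).card + 1 := by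
    have hsub : colorsIn col S ⊆ insert c ((ES.filter (fun e => col e ≠ c)).image col) := by
      intro x hx
      simp only [colorsIn, mem_image, ← hES] at hx
      obtain ⟨e, he, rfl⟩ := hx
      by_cases hxc : col e = c
      · rw [hxc]; exact Finset.mem_insert_self _ _
      · exact Finset.mem_insert_of_mem (Finset.mem_image.2 ⟨e, Finset.mem_filter.2 ⟨he, hxc⟩, rfl⟩)
    calc (colorsIn col S).card ≤ _ := Finset.card_le_card hsub
      _ ≤ ((ES.filter (fun e => col e ≠ c)).image col).card + 1 := Finset.card_insert_le _ _
      _ ≤ _ := by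
        have := Finset.card_image_le (s := ES.filter (fun e => col e ≠ c)) (f := col)
        omega
  have hsplit : (ES.filter (fun e => col e = c)).card
      + (ES.filter (fun e => col e ≠ c)).card = ES.card :=
    Finset.card_filter_add_card_filter_not _
  have hEScard : ES.card ≤ (a * (b + 1)).choose 2 := by
    have := card_nondiag_sym2 S
    rwa [hScard] at this
  have hba : b * a ≤ (a * (b + 1)).choose 2 := by
    have h1 : b * a ≤ a * (b + 1) := by
      calc b * a = a * b := Nat.mul_comm b a
        _ ≤ a * (b + 1) := Nat.mul_le_mul_left a (by omega)
    have h6 : 6 ≤ a * (b + 1) :=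
      calc 6 = 2 * 3 := rfl
        _ ≤ a * (b + 1) := Nat.mul_le_mul ha (by omega)
    have h2 : (a * (b + 1)).choose 1 ≤ (a * (b + 1)).choose 2 := by
      apply Nat.choose_le_succ_of_lt_half_left
      omega
    rw [Nat.choose_one_right] at h2
    omega
  have hloc := hlocal S hScard
  omega
end

section
/- Let a, b ≥ 2 be integers and n ≥ a(b+1). Let G be an edge coloring of K_n such that every a(b+1)-element subset of vertices spans edges of at least (a(b+1) choose 2) − ba + b + 1 distinct colors. For a color c, let V_c denote the set of vertices incident to at least one edge of color c. Then for any b pairwise distinct colors c₁, …, c_b each appearing on at least a edges, we have |V_{c₁} ∩ V_{c₂} ∩ … ∩ V_{c_b}| < a. -/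
open Finset

/-- The set `V_c` of vertices incident to at least one edge of color `c`. -/
def colorVerts {n : ℕ} {α : Type} [DecidableEq α]
    (col : Sym2 (Fin n) → α) (c : α) : Finset (Fin n) :=
  Finset.univ.filter (fun v : Fin n => ∃ u : Fin n, u ≠ v ∧ col s(v, u) = c)

/-- The endpoints of an unordered pair, as a `Finset`. -/
def evert {n : ℕ} (e : Sym2 (Fin n)) : Finset (Fin n) := Finset.univ.filter (· ∈ e)

lemma evert_mk {n : ℕ} (x y : Fin n) : evert s(x,y) = {x, y} := by
  ext v; simp [evert, Sym2.mem_iff]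

lemma mem_evert {n : ℕ} {v : Fin n} {e : Sym2 (Fin n)} : v ∈ evert e ↔ v ∈ e := by
  simp [evert]

lemma card_evert_le {n : ℕ} (e : Sym2 (Fin n)) : (evert e).card ≤ 2 := by
  induction e using Sym2.ind with
  | _ x y =>
    rw [evert_mk]
    exact (card_insert_le _ _).trans (by simp)

lemma card_evert_eq {n : ℕ} (e : Sym2 (Fin n)) (h : ¬ e.IsDiag) : (evert e).card = 2 := by
  induction e using Sym2.ind with
  | _ x y =>
    rw [evert_mk]
    rw [Sym2.mk_isDiag_iff] at h
    exact card_pair h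

lemma evert_injOn {n : ℕ} {e₁ e₂ : Sym2 (Fin n)} (h₁ : ¬ e₁.IsDiag) (h₂ : ¬ e₂.IsDiag)
    (h : evert e₁ = evert e₂) : e₁ = e₂ := by
  induction e₁ using Sym2.ind with
  | _ x y =>
    induction e₂ using Sym2.ind with
    | _ z w =>
      rw [evert_mk, evert_mk] at h
      rw [Sym2.mk_isDiag_iff] at h₁ h₂
      have hx : x ∈ ({z, w} : Finset (Fin n)) := by rw [← h]; simp
      have hy : y ∈ ({z, w} : Finset (Fin n)) := by rw [← h]; simp
      simp only [mem_insert, mem_singleton] at hx hy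
      rw [Sym2.eq_iff]
      rcases hx with hx | hx <;> rcases hy with hy | hy <;> simp_all

/-- Key selection lemma: if `A` has `a` vertices each incident to an edge of color `c`,
and color `c` has at least `a` edges globally, then one can select `a` edges of color `c`
whose endpoints outside `A` number at most `a` (counted with multiplicity). -/
lemma chooseEdges {n a : ℕ} {α : Type} [DecidableEq α] (col : Sym2 (Fin n) → α)
    (c : α) (A : Finset (Fin n)) (hA : A.card = a)
    (hAV : A ⊆ colorVerts col c)
    (hcnt : a ≤ edgeCount col c) :
    ∃ F : Finset (Sym2 (Fin n)), F.card = a ∧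
      (∀ e ∈ F, ¬ e.IsDiag ∧ col e = c) ∧
      ∑ e ∈ F, (evert e \ A).card ≤ a := by
  classical
  set Edges := Finset.univ.filter (fun e : Sym2 (Fin n) => ¬ e.IsDiag ∧ col e = c) with hE
  set M := Edges.filter (fun e => ∃ v ∈ A, v ∈ e) with hM
  have hMprop : ∀ e ∈ M, ¬ e.IsDiag ∧ col e = c := by
    intro e he
    exact (mem_filter.1 (mem_filter.1 he).1).2
  have costM : ∀ e ∈ M, (evert e \ A).card ≤ 1 := by
    intro e he
    obtain ⟨v, hvA, hve⟩ := (mem_filter.1 he).2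
    have hsub : evert e \ A ⊆ (evert e).erase v := by
      intro x hx
      rw [mem_sdiff] at hx
      rw [mem_erase]
      exact ⟨fun hxv => hx.2 (hxv ▸ hvA), hx.1⟩
    calc (evert e \ A).card ≤ ((evert e).erase v).card := card_le_card hsub
      _ = (evert e).card - 1 := card_erase_of_mem (mem_evert.2 hve)
      _ ≤ 1 := by have := card_evert_le e; omega
  by_cases hMa : a ≤ M.card
  · obtain ⟨F, hFM, hFcard⟩ := exists_subset_card_eq hMa
    refine ⟨F, hFcard, fun e he => hMprop e (hFM he), ?_⟩
    calc ∑ e ∈ F, (evert e \ A).card ≤ ∑ _e ∈ F, 1 :=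
          Finset.sum_le_sum (fun e he => costM e (hFM he))
      _ = a := by rw [Finset.sum_const, hFcard, smul_eq_mul, mul_one]
  · push_neg at hMa
    have hcov : A ⊆ M.biUnion (fun e => evert e ∩ A) := by
      intro v hv
      obtain ⟨u, hu, hcu⟩ := (mem_filter.1 (hAV hv)).2
      have hne : ¬ (s(v,u) : Sym2 (Fin n)).IsDiag := by
        rw [Sym2.mk_isDiag_iff]; exact fun h => hu h.symm
      have heM : s(v,u) ∈ M := by
        rw [hM, mem_filter, hE, mem_filter]
        exact ⟨⟨mem_univ _, hne, hcu⟩, v, hv, Sym2.mem_mk_left v u⟩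
      rw [mem_biUnion]
      exact ⟨s(v,u), heM, mem_inter.2 ⟨mem_evert.2 (Sym2.mem_mk_left v u), hv⟩⟩
    have hY : a ≤ ∑ e ∈ M, (evert e ∩ A).card := by
      calc a = A.card := hA.symm
        _ ≤ (M.biUnion (fun e => evert e ∩ A)).card := card_le_card hcov
        _ ≤ ∑ e ∈ M, (evert e ∩ A).card := card_biUnion_le
    have hXY : ∑ e ∈ M, (evert e \ A).card + ∑ e ∈ M, (evert e ∩ A).card = 2 * M.card := by
      rw [← Finset.sum_add_distrib]
      have : ∀ e ∈ M, (evert e \ A).card + (evert e ∩ A).card = 2 := by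
        intro e he
        rw [card_sdiff_add_card_inter]
        exact card_evert_eq e (hMprop e he).1
      rw [Finset.sum_congr rfl this, Finset.sum_const, smul_eq_mul, mul_comm]
    have hEM : a - M.card ≤ (Edges \ M).card := by
      have := card_le_card_sdiff_add_card (s := Edges) (t := M)
      have hMsub : M.card ≤ Edges.card := card_le_card (filter_subset _ _)
      have hcnt' : a ≤ Edges.card := hcnt
      omega
    obtain ⟨G, hGsub, hGcard⟩ := exists_subset_card_eq hEM
    have hdisj : Disjoint M G := by
      refine disjoint_left.2 (fun e heM heG => ?_)
      exact (mem_sdiff.1 (hGsub heG)).2 heM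
    refine ⟨M ∪ G, ?_, ?_, ?_⟩
    · rw [card_union_of_disjoint hdisj, hGcard]; omega
    · intro e he
      rcases mem_union.1 he with h | h
      · exact hMprop e h
      · exact (mem_filter.1 (mem_sdiff.1 (hGsub h)).1).2
    · rw [Finset.sum_union hdisj]
      have hG2 : ∑ e ∈ G, (evert e \ A).card ≤ 2 * (a - M.card) := by
        calc ∑ e ∈ G, (evert e \ A).card ≤ ∑ _e ∈ G, 2 := by
              refine Finset.sum_le_sum (fun e _ => ?_)
              exact (card_le_card (sdiff_subset)).trans (card_evert_le e)
          _ = 2 * (a - M.card) := by rw [Finset.sum_const, hGcard, smul_eq_mul, mul_comm]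
      omega

/-- Let `a, b ≥ 2` and `n ≥ a(b+1)`. In every edge coloring of `K_n` in which every
`a(b+1)`-element vertex subset spans at least `(a(b+1) choose 2) - ba + b + 1` distinct
colors, any `b` pairwise distinct colors `c₁, …, c_b`, each appearing on at least `a`
edges, satisfy `|V_{c₁} ∩ ⋯ ∩ V_{c_b}| < a`. -/
theorem stmt13 (a b n : ℕ) (ha : 2 ≤ a) (hb : 2 ≤ b) (hn : a * (b + 1) ≤ n)
    (α : Type) [DecidableEq α] (col : Sym2 (Fin n) → α)
    (hlocal : ∀ S : Finset (Fin n), S.card = a * (b + 1) →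
      (a * (b + 1)).choose 2 - b * a + b + 1 ≤ (colorsIn col S).card) :
    ∀ c : Fin b → α, Function.Injective c →
      (∀ i : Fin b, a ≤ edgeCount col (c i)) →
      (Finset.univ.filter (fun v : Fin n => ∀ i : Fin b, v ∈ colorVerts col (c i))).card
        < a := by
  classical
  intro c hcinj hccnt
  by_contra hcon
  push_neg at hcon
  obtain ⟨A, hAsub, hA⟩ := exists_subset_card_eq hcon
  have hAV : ∀ i, A ⊆ colorVerts col (c i) := fun i v hv => (mem_filter.1 (hAsub hv)).2 i
  choose F hFcard hFprop hFcost using fun i : Fin b =>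
    chooseEdges col (c i) A hA (hAV i) (hccnt i)
  set S0 : Finset (Fin n) :=
    A ∪ Finset.univ.biUnion (fun i : Fin b => (F i).biUnion (fun e => evert e \ A)) with hS0
  have hS0card : S0.card ≤ a * (b + 1) := by
    calc S0.card ≤ A.card +
        (Finset.univ.biUnion (fun i : Fin b => (F i).biUnion (fun e => evert e \ A))).card :=
          card_union_le _ _
      _ ≤ a + ∑ i : Fin b, ((F i).biUnion (fun e => evert e \ A)).card := by
          rw [hA]; exact Nat.add_le_add_left card_biUnion_le a
      _ ≤ a + ∑ i : Fin b, a := by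
          refine Nat.add_le_add_left (Finset.sum_le_sum fun i _ => ?_) a
          exact le_trans card_biUnion_le (hFcost i)
      _ = a * (b + 1) := by
          rw [Finset.sum_const, card_univ, Fintype.card_fin, smul_eq_mul]; ring
  obtain ⟨S, hS0S, -, hScard⟩ := exists_subsuperset_card_eq (subset_univ S0) hS0card
    (by rw [card_univ, Fintype.card_fin]; exact hn)
  set E := S.sym2.filter (fun e => ¬ e.IsDiag) with hEdef
  have hF_sub : ∀ i, F i ⊆ E.filter (fun e => col e = c i) := by
    intro i e he
    have hprop := hFprop i e he
    have hvert : evert e ⊆ S := by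
      intro v hv
      apply hS0S
      rw [hS0, mem_union]
      by_cases hvA : v ∈ A
      · exact Or.inl hvA
      · refine Or.inr (mem_biUnion.2 ⟨i, mem_univ _, mem_biUnion.2 ⟨e, he, ?_⟩⟩)
        exact mem_sdiff.2 ⟨hv, hvA⟩
    rw [mem_filter, hEdef, mem_filter]
    refine ⟨⟨?_, hprop.1⟩, hprop.2⟩
    induction e using Sym2.ind with
    | _ x y =>
      rw [mk_mem_sym2_iff]
      constructor
      · exact hvert (mem_evert.2 (Sym2.mem_mk_left x y))
      · exact hvert (mem_evert.2 (Sym2.mem_mk_right x y))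
  set D := Finset.univ.biUnion (fun i : Fin b => E.filter (fun e => col e = c i)) with hDdef
  have hDcard : b * a ≤ D.card := by
    rw [hDdef, card_biUnion]
    · calc b * a = ∑ _i : Fin b, a := by
            rw [Finset.sum_const, card_univ, Fintype.card_fin, smul_eq_mul]
        _ ≤ ∑ i : Fin b, (E.filter (fun e => col e = c i)).card :=
            Finset.sum_le_sum fun i _ => by
              rw [← hFcard i]; exact card_le_card (hF_sub i)
    · intro i _ j _ hij
      refine disjoint_left.2 fun e hei hej => ?_
      exact hij (hcinj ((mem_filter.1 hei).2.symm.trans (mem_filter.1 hej).2))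
  have hD_sub : D ⊆ E := by
    rw [hDdef]
    exact biUnion_subset.2 fun i _ => filter_subset _ _
  have himg : (colorsIn col S).card ≤ (E \ D).card + b := by
    have hsub : colorsIn col S ⊆ ((E \ D).image col) ∪ Finset.univ.image c := by
      intro x hx
      obtain ⟨e, he, hex⟩ := mem_image.1 hx
      by_cases heD : e ∈ D
      · obtain ⟨i, _, hei⟩ := mem_biUnion.1 heD
        exact mem_union_right _ (mem_image.2 ⟨i, mem_univ _, (mem_filter.1 hei).2 ▸ hex⟩)
      · exact mem_union_left _ (mem_image.2 ⟨e, mem_sdiff.2 ⟨he, heD⟩, hex⟩)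
    calc (colorsIn col S).card ≤ (((E \ D).image col) ∪ Finset.univ.image c).card :=
          card_le_card hsub
      _ ≤ ((E \ D).image col).card + (Finset.univ.image c).card := card_union_le _ _
      _ ≤ (E \ D).card + b := by
          refine Nat.add_le_add (card_image_le) ?_
          exact (card_image_le).trans (by rw [card_univ, Fintype.card_fin])
  have hEcard : E.card ≤ (a * (b + 1)).choose 2 := by
    have hinj : ∀ e ∈ E, evert e ∈ S.powersetCard 2 := by
      intro e he
      rw [mem_powersetCard]
      rw [hEdef, mem_filter] at he
      constructor
      · intro v hv
        induction e using Sym2.ind with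
        | _ x y =>
          have hxy := (mk_mem_sym2_iff).1 he.1
          rcases Sym2.mem_iff.1 (mem_evert.1 hv) with h | h
          · exact h ▸ hxy.1
          · exact h ▸ hxy.2
      · exact card_evert_eq e he.2
    calc E.card ≤ (S.powersetCard 2).card := by
          refine card_le_card_of_injOn evert hinj ?_
          intro e₁ h₁ e₂ h₂ h
          exact evert_injOn (mem_filter.1 h₁).2 (mem_filter.1 h₂).2 h
      _ = (a * (b + 1)).choose 2 := by rw [card_powersetCard, hScard]
  have hloc := hlocal S hScard
  have hsdiff : (E \ D).card = E.card - D.card := card_sdiff_of_subset hD_sub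
  have hDE : D.card ≤ E.card := card_le_card hD_sub
  omega
end

section
/- For all integers a, b ≥ 2 there exists a constant C > 0 such that for every n and every edge coloring of K_n with the property that every a(b+1)-element subset of vertices spans edges of at least (a(b+1) choose 2) − ba + b + 1 distinct colors, the color energy satisfies 𝔈(G) = Σ_c m_c² ≤ C · n^{3 − 1/b}. -/
open Finset

/-- card of non-diagonal part of sym2 -/
lemma card_sym2_not_isDiag {β : Type*} [DecidableEq β] (S : Finset β) :
    (S.sym2.filter (fun e => ¬ e.IsDiag)).card = S.card.choose 2 := by
  have hdiag : S.sym2.filter (fun e => e.IsDiag) = S.image (fun x => s(x, x)) := by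
    ext e
    induction e using Sym2.inductionOn with
    | hf x y =>
      simp only [mem_filter, mem_image, Finset.mem_sym2_iff, Sym2.mk_isDiag_iff, Sym2.mem_iff]
      constructor
      · rintro ⟨hmem, rfl⟩
        exact ⟨x, hmem x (Or.inl rfl), rfl⟩
      · rintro ⟨z, hz, h⟩
        rw [Sym2.eq_iff] at h
        rcases h with ⟨rfl, rfl⟩ | ⟨rfl, rfl⟩
        · exact ⟨fun u hu => by rcases hu with rfl | rfl <;> exact hz, rfl⟩
        · exact ⟨fun u hu => by rcases hu with rfl | rfl <;> exact hz, rfl⟩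
  have hdc : (S.sym2.filter (fun e => e.IsDiag)).card = S.card := by
    rw [hdiag]
    apply card_image_of_injective
    intro u v h
    simpa [Sym2.eq_iff] using h
  have htot := S.card_sym2
  have hsplit := card_filter_add_card_filter_not
    (s := S.sym2) (p := fun e => e.IsDiag)
  have hch : (S.card + 1).choose 2 = S.card.choose 1 + S.card.choose 2 :=
    Nat.choose_succ_succ _ _
  rw [Nat.choose_one_right] at hch
  omega

/-- image cardinality drop when several colors have big fibers -/
lemma image_card_le_of_fibers {β γ : Type*} [DecidableEq β] [DecidableEq γ]
    (s : Finset β) (f : β → γ) (Γ : Finset γ) (A : ℕ)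
    (hA : ∀ c ∈ Γ, A ≤ (s.filter (fun x => f x = c)).card) :
    (s.image f).card + Γ.card * A ≤ s.card + Γ.card := by
  classical
  set U := s.filter (fun x => f x ∈ Γ) with hU
  have hUcard : U.card = ∑ c ∈ Γ, (U.filter (fun x => f x = c)).card :=
    card_eq_sum_card_fiberwise (fun x hx => (mem_filter.1 hx).2)
  have hfib : ∀ c ∈ Γ, (U.filter (fun x => f x = c)) = s.filter (fun x => f x = c) := by
    intro c hc
    rw [hU, filter_filter]
    apply filter_congr
    intro x hx
    constructor
    · rintro ⟨_, h⟩; exact h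
    · intro h; exact ⟨h ▸ hc, h⟩
  have hUge : Γ.card * A ≤ U.card := by
    rw [hUcard]
    calc Γ.card * A = Γ.card • A := rfl
    _ ≤ ∑ c ∈ Γ, (U.filter (fun x => f x = c)).card := by
        apply Finset.card_nsmul_le_sum
        intro c hc
        rw [hfib c hc]; exact hA c hc
  have hsub : s.image f ⊆ ((s \ U).image f) ∪ Γ := by
    intro y hy
    obtain ⟨x, hx, rfl⟩ := mem_image.1 hy
    by_cases h : f x ∈ Γ
    · exact mem_union_right _ h
    · refine mem_union_left _ (mem_image.2 ⟨x, ?_, rfl⟩)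
      rw [mem_sdiff]
      exact ⟨hx, fun hxU => h (mem_filter.1 hxU).2⟩
  have h1 : (s.image f).card ≤ (s \ U).card + Γ.card :=
    (card_le_card hsub).trans ((card_union_le _ _).trans (by
      exact Nat.add_le_add_right (card_image_le) _))
  have h2 : (s \ U).card = s.card - U.card := card_sdiff_of_subset (filter_subset _ _)
  have h3 : U.card ≤ s.card := card_le_card (filter_subset _ _)
  omega

/-- greedy independent set in a bounded-degree symmetric relation -/
lemma exists_indep {β : Type*} [DecidableEq β] [Fintype β]
    (r : β → β → Prop) [DecidableRel r] (D : ℕ)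
    (hsym : ∀ u w, r u w → r w u)
    (hdeg : ∀ v, (univ.filter (fun u => r v u)).card ≤ D) :
    ∀ (t : ℕ) (P : Finset β), t * (D + 1) ≤ P.card →
      ∃ W, W ⊆ P ∧ W.card = t ∧ ∀ u ∈ W, ∀ w ∈ W, u ≠ w → ¬ r u w := by
  intro t
  induction t with
  | zero => intro P _; exact ⟨∅, empty_subset _, card_empty, by simp⟩
  | succ t ih =>
    intro P hP
    have hmul : (t + 1) * (D + 1) = t * (D + 1) + (D + 1) := by ring
    have hPne : P.Nonempty := by
      rw [← card_pos]; omega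
    obtain ⟨v, hv⟩ := hPne
    have hBcard : (insert v (univ.filter (fun u => r v u))).card ≤ D + 1 := by
      calc (insert v (univ.filter (fun u => r v u))).card
          ≤ (univ.filter (fun u => r v u)).card + 1 := card_insert_le _ _
      _ ≤ D + 1 := by have := hdeg v; omega
    have hsd : P.card - (insert v (univ.filter (fun u => r v u))).card
        ≤ (P \ insert v (univ.filter (fun u => r v u))).card := le_card_sdiff _ _
    have hP' : t * (D + 1) ≤ (P \ insert v (univ.filter (fun u => r v u))).card := by
      omega
    obtain ⟨W', hW'P, hW'card, hW'ind⟩ := ih _ hP'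
    have hvW' : v ∉ W' := fun h => by
      have := mem_sdiff.1 (hW'P h)
      exact this.2 (mem_insert_self _ _)
    refine ⟨insert v W', ?_, ?_, ?_⟩
    · intro x hx
      rcases mem_insert.1 hx with rfl | hx
      · exact hv
      · exact (mem_sdiff.1 (hW'P hx)).1
    · rw [card_insert_of_notMem hvW', hW'card]
    · intro u hu w hw hne
      rcases mem_insert.1 hu with hu1 | hu1
      · rcases mem_insert.1 hw with hw1 | hw1
        · exact absurd (hu1.trans hw1.symm) hne
        · rw [hu1]
          intro hr
          exact (mem_sdiff.1 (hW'P hw1)).2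
            (mem_insert_of_mem (mem_filter.2 ⟨mem_univ _, hr⟩))
      · rcases mem_insert.1 hw with hw1 | hw1
        · rw [hw1]
          intro hr
          exact (mem_sdiff.1 (hW'P hu1)).2
            (mem_insert_of_mem (mem_filter.2 ⟨mem_univ _, hsym u v hr⟩))
        · exact hW'ind u hu1 w hw1 hne

/-- from large monochromatic fibers in a bounded vertex set, contradict the local property -/
lemma keyViolation {n : ℕ} {α : Type} [DecidableEq α] {a b : ℕ}
    (col : Sym2 (Fin n) → α)
    (hyp : ∀ S : Finset (Fin n), S.card = a * (b + 1) →
      (a * (b + 1)).choose 2 - b * a + b + 1 ≤ (colorsIn col S).card)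
    (hba : b * a ≤ (a * (b + 1)).choose 2)
    (hn : a * (b + 1) ≤ n)
    (Γ : Finset α) (A : ℕ) (V₀ : Finset (Fin n)) (hV₀ : V₀.card ≤ a * (b + 1))
    (E : α → Finset (Sym2 (Fin n)))
    (hEcard : ∀ c ∈ Γ, A ≤ (E c).card)
    (hEcol : ∀ c ∈ Γ, ∀ e ∈ E c, col e = c ∧ ¬ e.IsDiag ∧ ∀ x ∈ e, x ∈ V₀) :
    Γ.card * A + b + 1 ≤ b * a + Γ.card := by
  obtain ⟨S, hV₀S, -, hScard⟩ :=
    exists_subsuperset_card_eq (subset_univ V₀) hV₀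
      (by simpa [Fintype.card_fin] using hn)
  have hfib : ∀ c ∈ Γ, A ≤ (((S.sym2.filter (fun e => ¬ e.IsDiag)).filter
      (fun e => col e = c))).card := by
    intro c hc
    refine (hEcard c hc).trans (card_le_card ?_)
    intro e he
    obtain ⟨h1, h2, h3⟩ := hEcol c hc e he
    simp only [mem_filter, Finset.mem_sym2_iff]
    exact ⟨⟨fun x hx => hV₀S (h3 x hx), h2⟩, h1⟩
  have hL1 := image_card_le_of_fibers (S.sym2.filter (fun e => ¬ e.IsDiag)) col Γ A hfib
  have hcard := card_sym2_not_isDiag S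
  rw [hScard] at hcard
  have hhyp := hyp S hScard
  have hci : (colorsIn col S).card = ((S.sym2.filter (fun e => ¬ e.IsDiag)).image col).card := rfl
  omega

section
variable {n : ℕ} {α : Type} [DecidableEq α] (col : Sym2 (Fin n) → α)

/-- colors at a vertex -/
def colAt (v : Fin n) : Finset α :=
  (univ.filter (fun u => u ≠ v)).image (fun u => col s(v, u))

lemma mem_colAt (v : Fin n) (c : α) :
    c ∈ colAt col v ↔ ∃ u, u ≠ v ∧ col s(v, u) = c := by
  simp [colAt]

/-- degree of vertex in a color -/
def cdeg (v : Fin n) (c : α) : ℕ :=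
  (univ.filter (fun u => u ≠ v ∧ col s(v, u) = c)).card

lemma cdeg_eq_zero (v : Fin n) (c : α) (h : c ∉ colAt col v) : cdeg col v c = 0 := by
  rw [cdeg, card_eq_zero, filter_eq_empty_iff]
  intro u _
  rw [mem_colAt] at h
  push_neg at h
  intro hc
  exact (h u hc.1) hc.2

lemma edgeCount_le_sum_cdeg (c : α) : edgeCount col c ≤ ∑ v, cdeg col v c := by
  rw [edgeCount]
  have hsub : (Finset.univ.filter (fun e : Sym2 (Fin n) => ¬ e.IsDiag ∧ col e = c))
      ⊆ univ.biUnion (fun v => (univ.filter (fun u => u ≠ v ∧ col s(v, u) = c)).image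
          (fun u => s(v, u))) := by
    intro e he
    induction e using Sym2.inductionOn with
    | hf x y =>
      rw [mem_filter, Sym2.mk_isDiag_iff] at he
      refine mem_biUnion.2 ⟨x, mem_univ _, mem_image.2 ⟨y, ?_, rfl⟩⟩
      rw [mem_filter]
      exact ⟨mem_univ _, fun h => he.2.1 h.symm, he.2.2⟩
  refine (card_le_card hsub).trans (card_biUnion_le.trans ?_)
  apply sum_le_sum
  intro v _
  exact card_image_le

/-- max monochromatic degree -/
lemma maxdeg {a b : ℕ}
    (hyp : ∀ S : Finset (Fin n), S.card = a * (b + 1) →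
      (a * (b + 1)).choose 2 - b * a + b + 1 ≤ (colorsIn col S).card)
    (hba : b * a ≤ (a * (b + 1)).choose 2)
    (hn : a * (b + 1) ≤ n) (ha : 2 ≤ a) (hb : 2 ≤ b)
    (v : Fin n) (c : α) :
    cdeg col v c ≤ b * a - b := by
  rw [cdeg]
  by_contra hcon
  push_neg at hcon
  obtain ⟨t, ht, htcard⟩ := exists_subset_card_eq hcon
  have hMem : ∀ u ∈ t, u ≠ v ∧ col s(v, u) = c := by
    intro u hu
    exact (mem_filter.1 (ht hu)).2
  have hinj : Set.InjOn (fun u => s(v, u)) t := by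
    intro u hu u' hu' h
    simp only [Sym2.eq_iff] at h
    rcases h with ⟨-, h⟩ | ⟨h1, h2⟩
    · exact h
    · rw [h2]; exact h1
  have := keyViolation col hyp hba hn {c} (b * a - b + 1) (insert v t)
    (by
      have h1 := card_insert_le v t
      have h2 : a * (b + 1) = a * b + a := by ring
      have h3 : b * a = a * b := Nat.mul_comm _ _
      have h4 : b ≤ b * a := Nat.le_mul_of_pos_right _ (by omega)
      omega)
    (fun _ => t.image (fun u => s(v, u)))
    (by
      intro c' _
      rw [card_image_of_injOn hinj, htcard])
    (by
      intro c' hc'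
      rw [mem_singleton] at hc'
      subst hc'
      intro e he
      obtain ⟨u, hu, rfl⟩ := mem_image.1 he
      refine ⟨(hMem u hu).2, ?_, ?_⟩
      · rw [Sym2.mk_isDiag_iff]
        exact fun h => (hMem u hu).1 h.symm
      · intro x hx
        rw [Sym2.mem_iff] at hx
        rcases hx with rfl | rfl
        · exact mem_insert_self _ _
        · exact mem_insert_of_mem hu)
  simp only [card_singleton] at this
  omega

/-- bound on the number of vertices seeing all colors of a b-element color set -/
lemma claimA {a b : ℕ}
    (hyp : ∀ S : Finset (Fin n), S.card = a * (b + 1) →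
      (a * (b + 1)).choose 2 - b * a + b + 1 ≤ (colorsIn col S).card)
    (hba : b * a ≤ (a * (b + 1)).choose 2)
    (hn : a * (b + 1) ≤ n) (ha : 2 ≤ a) (hb : 2 ≤ b)
    (Γ : Finset α) (hΓ : Γ.card = b) :
    (univ.filter (fun v => ∀ c ∈ Γ, ∃ u, u ≠ v ∧ col s(v, u) = c)).card
      ≤ a * (b * (b * a - b) + 1) := by
  classical
  by_contra hcon
  push_neg at hcon
  set M := b * a - b with hM
  set r : Fin n → Fin n → Prop := fun v u => u ≠ v ∧ col s(v, u) ∈ Γ with hr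
  have hsym : ∀ u w, r u w → r w u := by
    intro u w ⟨h1, h2⟩
    refine ⟨h1.symm, ?_⟩
    rwa [Sym2.eq_swap]
  have hdeg : ∀ v, (univ.filter (fun u => r v u)).card ≤ b * M := by
    intro v
    have hfw : (univ.filter (fun u => r v u)).card
        = ∑ c ∈ Γ, ((univ.filter (fun u => r v u)).filter
            (fun u => col s(v, u) = c)).card :=
      card_eq_sum_card_fiberwise (fun u hu => (mem_filter.1 hu).2.2)
    rw [hfw]
    calc ∑ c ∈ Γ, ((univ.filter (fun u => r v u)).filter (fun u => col s(v, u) = c)).card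
        ≤ ∑ c ∈ Γ, M := by
          apply sum_le_sum
          intro c hc
          refine le_trans (card_le_card ?_) (maxdeg col hyp hba hn ha hb v c)
          intro u hu
          simp only [mem_filter] at hu ⊢
          exact ⟨mem_univ _, hu.1.2.1, hu.2⟩
      _ = b * M := by rw [sum_const, hΓ]; ring
  obtain ⟨W, hWP, hWcard, hWind⟩ := exists_indep r (b * M) hsym hdeg a _ (le_of_lt hcon)
  have hex : ∀ w : Fin n, ∀ c : α, ∃ z : Fin n,
      w ∈ W → c ∈ Γ → (z ≠ w ∧ col s(w, z) = c) := by
    intro w c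
    by_cases h : w ∈ W ∧ c ∈ Γ
    · obtain ⟨z, hz⟩ := (mem_filter.1 (hWP h.1)).2 c h.2
      exact ⟨z, fun _ _ => hz⟩
    · exact ⟨w, fun h1 h2 => absurd ⟨h1, h2⟩ h⟩
  choose u hu using hex
  have hV₀card : (W ∪ W.biUnion (fun w => Γ.image (u w))).card ≤ a * (b + 1) := by
    have h1 : (W.biUnion (fun w => Γ.image (u w))).card ≤ a * b := by
      refine (card_biUnion_le).trans ?_
      calc ∑ w ∈ W, (Γ.image (u w)).card ≤ ∑ w ∈ W, b := by
            apply sum_le_sum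
            intro w _
            exact (card_image_le).trans (le_of_eq hΓ)
        _ = a * b := by rw [sum_const, hWcard]; ring
    have := card_union_le W (W.biUnion (fun w => Γ.image (u w)))
    have h2 : a * (b + 1) = a + a * b := by ring
    omega
  have hkey := keyViolation col hyp hba hn Γ a (W ∪ W.biUnion (fun w => Γ.image (u w))) hV₀card
    (fun c => W.image (fun w => s(w, u w c)))
    (by
      intro c hc
      rw [card_image_of_injOn, hWcard]
      intro w hw w' hw' h
      simp only [Sym2.eq_iff] at h
      rcases h with ⟨h1, -⟩ | ⟨h1, h2⟩
      · exact h1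
      · by_contra hne
        refine hWind w' (Finset.mem_coe.1 hw') w (Finset.mem_coe.1 hw)
          (fun hh => hne hh.symm) ⟨hne, ?_⟩
        rw [h1, (hu w' c (Finset.mem_coe.1 hw') hc).2]
        exact hc)
    (by
      intro c hc
      intro e he
      obtain ⟨w, hw, rfl⟩ := mem_image.1 he
      refine ⟨(hu w c hw hc).2, ?_, ?_⟩
      · rw [Sym2.mk_isDiag_iff]
        exact fun h => (hu w c hw hc).1 h.symm
      · intro x hx
        rw [Sym2.mem_iff] at hx
        rcases hx with rfl | rfl
        · exact mem_union_left _ hw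
        · refine mem_union_right _ (mem_biUnion.2 ⟨w, hw, mem_image.2 ⟨c, hc, rfl⟩⟩))
  rw [hΓ] at hkey
  omega

/-- energy bounded by common-color count -/
lemma energy_le (M : ℕ) (hM : ∀ v c, cdeg col v c ≤ M) (CI : Finset α) :
    ∑ c ∈ CI, (edgeCount col c) ^ 2
      ≤ M ^ 2 * ∑ p : Fin n × Fin n, (colAt col p.1 ∩ colAt col p.2).card := by
  have step1 : ∀ c ∈ CI, (edgeCount col c) ^ 2
      ≤ ∑ p : Fin n × Fin n, cdeg col p.1 c * cdeg col p.2 c := by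
    intro c _
    calc (edgeCount col c) ^ 2 ≤ (∑ v, cdeg col v c) ^ 2 :=
          Nat.pow_le_pow_left (edgeCount_le_sum_cdeg col c) 2
    _ = ∑ v, ∑ x, cdeg col v c * cdeg col x c := by
          rw [pow_two, Finset.sum_mul_sum]
    _ = ∑ p : Fin n × Fin n, cdeg col p.1 c * cdeg col p.2 c := by
          rw [← Finset.sum_product']
          rfl
  calc ∑ c ∈ CI, (edgeCount col c) ^ 2
      ≤ ∑ c ∈ CI, ∑ p : Fin n × Fin n, cdeg col p.1 c * cdeg col p.2 c :=
        sum_le_sum step1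
    _ = ∑ p : Fin n × Fin n, ∑ c ∈ CI, cdeg col p.1 c * cdeg col p.2 c :=
        Finset.sum_comm
    _ ≤ ∑ p : Fin n × Fin n, M ^ 2 * (colAt col p.1 ∩ colAt col p.2).card := by
        apply sum_le_sum
        intro p _
        have hfilt : ∑ c ∈ CI, cdeg col p.1 c * cdeg col p.2 c
            = ∑ c ∈ CI.filter (fun c => c ∈ colAt col p.1 ∩ colAt col p.2),
                cdeg col p.1 c * cdeg col p.2 c := by
          symm
          apply sum_filter_of_ne
          intro c _ hne
          rw [mem_inter]
          constructor
          · by_contra h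
            exact hne (by rw [cdeg_eq_zero col p.1 c h, zero_mul])
          · by_contra h
            exact hne (by rw [cdeg_eq_zero col p.2 c h, mul_zero])
        rw [hfilt]
        calc ∑ c ∈ CI.filter (fun c => c ∈ colAt col p.1 ∩ colAt col p.2),
              cdeg col p.1 c * cdeg col p.2 c
            ≤ ∑ _c ∈ CI.filter (fun c => c ∈ colAt col p.1 ∩ colAt col p.2), M ^ 2 := by
              apply sum_le_sum
              intro c _
              rw [pow_two]
              exact Nat.mul_le_mul (hM p.1 c) (hM p.2 c)
          _ = (CI.filter (fun c => c ∈ colAt col p.1 ∩ colAt col p.2)).card * M ^ 2 := by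
              rw [sum_const, smul_eq_mul]
          _ ≤ (colAt col p.1 ∩ colAt col p.2).card * M ^ 2 := by
              apply Nat.mul_le_mul_right
              apply card_le_card
              intro c hc
              exact (mem_filter.1 hc).2
          _ = M ^ 2 * (colAt col p.1 ∩ colAt col p.2).card := Nat.mul_comm _ _
    _ = M ^ 2 * ∑ p : Fin n × Fin n, (colAt col p.1 ∩ colAt col p.2).card :=
        (Finset.mul_sum _ _ _).symm

/-- double counting: sum over pairs of binomials of common-color counts -/
lemma sum_choose_le (b τ : ℕ)
    (hτ : ∀ Γ : Finset α, Γ.card = b →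
      (univ.filter (fun v => Γ ⊆ colAt col v)).card ≤ τ) :
    ∑ p : Fin n × Fin n, ((colAt col p.1 ∩ colAt col p.2).card).choose b
      ≤ τ * (n * n ^ b) := by
  classical
  set CC : Finset α := univ.biUnion (colAt col) with hCC
  have hsub : ∀ v, colAt col v ⊆ CC := by
    intro v c hc
    exact mem_biUnion.2 ⟨v, mem_univ _, hc⟩
  have hpc : ∀ s : Finset α, s ⊆ CC →
      s.powersetCard b = (CC.powersetCard b).filter (fun Γ => Γ ⊆ s) := by
    intro s hs
    ext Γ
    simp only [mem_powersetCard, mem_filter]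
    constructor
    · rintro ⟨h1, h2⟩
      exact ⟨⟨h1.trans hs, h2⟩, h1⟩
    · rintro ⟨⟨-, h2⟩, h3⟩
      exact ⟨h3, h2⟩
  have step1 : ∀ p : Fin n × Fin n,
      ((colAt col p.1 ∩ colAt col p.2).card).choose b
        = ((CC.powersetCard b).filter
            (fun Γ => Γ ⊆ colAt col p.1 ∧ Γ ⊆ colAt col p.2)).card := by
    intro p
    rw [← Finset.card_powersetCard,
      hpc _ ((inter_subset_left).trans (hsub p.1))]
    congr 1
    apply filter_congr
    intro Γ _
    simp [subset_inter_iff]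
  calc ∑ p : Fin n × Fin n, ((colAt col p.1 ∩ colAt col p.2).card).choose b
      = ∑ p : Fin n × Fin n, ∑ Γ ∈ CC.powersetCard b,
          (if Γ ⊆ colAt col p.1 ∧ Γ ⊆ colAt col p.2 then 1 else 0) := by
        refine Finset.sum_congr rfl (fun p _ => ?_)
        rw [step1 p, card_filter]
    _ = ∑ Γ ∈ CC.powersetCard b, ∑ p : Fin n × Fin n,
          (if Γ ⊆ colAt col p.1 ∧ Γ ⊆ colAt col p.2 then 1 else 0) := Finset.sum_comm
    _ = ∑ Γ ∈ CC.powersetCard b,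
          ((univ.filter (fun v => Γ ⊆ colAt col v)).card
            * (univ.filter (fun v => Γ ⊆ colAt col v)).card) := by
        refine Finset.sum_congr rfl (fun Γ _ => ?_)
        rw [← card_filter]
        have : (univ : Finset (Fin n × Fin n)).filter
              (fun p => Γ ⊆ colAt col p.1 ∧ Γ ⊆ colAt col p.2)
            = (univ.filter (fun v => Γ ⊆ colAt col v)) ×ˢ
              (univ.filter (fun v => Γ ⊆ colAt col v)) := by
          rw [← Finset.univ_product_univ]
          exact Finset.filter_product (fun v => Γ ⊆ colAt col v) (fun v => Γ ⊆ colAt col v)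
        rw [this, card_product]
    _ ≤ ∑ Γ ∈ CC.powersetCard b, τ * (univ.filter (fun v => Γ ⊆ colAt col v)).card := by
        apply sum_le_sum
        intro Γ hΓ
        exact Nat.mul_le_mul_right _ (hτ Γ (mem_powersetCard.1 hΓ).2)
    _ = τ * ∑ Γ ∈ CC.powersetCard b, (univ.filter (fun v => Γ ⊆ colAt col v)).card :=
        (Finset.mul_sum _ _ _).symm
    _ ≤ τ * (n * n ^ b) := by
        apply Nat.mul_le_mul_left
        calc ∑ Γ ∈ CC.powersetCard b, (univ.filter (fun v => Γ ⊆ colAt col v)).card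
            = ∑ Γ ∈ CC.powersetCard b, ∑ v : Fin n,
                (if Γ ⊆ colAt col v then 1 else 0) := by
              refine Finset.sum_congr rfl (fun Γ _ => ?_)
              rw [card_filter]
          _ = ∑ v : Fin n, ∑ Γ ∈ CC.powersetCard b,
                (if Γ ⊆ colAt col v then 1 else 0) := Finset.sum_comm
          _ = ∑ v : Fin n, ((colAt col v).card).choose b := by
              refine Finset.sum_congr rfl (fun v _ => ?_)
              rw [← card_filter, ← hpc _ (hsub v), Finset.card_powersetCard]
          _ ≤ ∑ _v : Fin n, n ^ b := by
              apply sum_le_sum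
              intro v _
              have h1 : (colAt col v).card ≤ n := by
                refine (card_image_le).trans ?_
                refine (card_filter_le _ _).trans ?_
                simp
              exact (Nat.choose_le_pow _ _).trans (Nat.pow_le_pow_left h1 b)
          _ = n * n ^ b := by rw [sum_const, card_univ, Fintype.card_fin, smul_eq_mul]

end

/-- pointwise: (m - 2b)^b ≤ b^b * choose m b -/
lemma pow_sub_le_pow_mul_choose (m b : ℕ) (hb : 1 ≤ b) :
    (m - 2 * b) ^ b ≤ b ^ b * m.choose b := by
  by_cases h : m ≤ 2 * b
  · rw [Nat.sub_eq_zero_of_le h, Nat.zero_pow (by omega)]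
    exact Nat.zero_le _
  · push_neg at h
    calc (m - 2 * b) ^ b ≤ (m + 1 - b) ^ b :=
          Nat.pow_le_pow_left (by omega) b
      _ ≤ m.descFactorial b := Nat.pow_sub_le_descFactorial m b
      _ = b.factorial * m.choose b := Nat.descFactorial_eq_factorial_mul_choose m b
      _ ≤ b ^ b * m.choose b := Nat.mul_le_mul_right _ (Nat.factorial_le_pow b)

/-- For all integers `a, b ≥ 2` there is `C > 0` such that for every `n` and every edge
coloring of `K_n` in which every `a(b+1)`-element vertex subset spans at least
`(a(b+1) choose 2) - ba + b + 1` distinct colors, the color energy satisfies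
`𝔈(G) = Σ_c m_c² ≤ C n^(3 - 1/b)`. -/
theorem stmt16 (a b : ℕ) (ha : 2 ≤ a) (hb : 2 ≤ b) :
    ∃ C : ℝ, 0 < C ∧
      ∀ (n : ℕ) (α : Type) (_ : DecidableEq α) (col : Sym2 (Fin n) → α),
        (∀ S : Finset (Fin n), S.card = a * (b + 1) →
          (a * (b + 1)).choose 2 - b * a + b + 1 ≤ (colorsIn col S).card) →
        ∑ c ∈ colorsIn col Finset.univ, ((edgeCount col c : ℝ)) ^ 2
          ≤ C * (n : ℝ) ^ ((3 : ℝ) - 1 / (b : ℝ)) := by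
  -- constants
  set M : ℕ := b * a - b with hMdef
  set τ : ℕ := a * (b * M + 1) with hτdef
  set K1 : ℕ := b ^ b * τ with hK1def
  set Cnat : ℕ := (b * a) ^ 2 * (2 * b + K1) + (a * (b + 1)) ^ 2 + 1 with hCdef
  refine ⟨(Cnat : ℝ), by positivity, ?_⟩
  intro n α _ col hyp
  -- preliminaries
  have hbR : (1 : ℝ) ≤ (b : ℝ) := by exact_mod_cast (by omega : 1 ≤ b)
  have hexp2 : (2 : ℝ) ≤ (3 : ℝ) - 1 / (b : ℝ) := by
    have h1 : 1 / (b : ℝ) ≤ 1 := by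
      rw [div_le_one (by linarith)]
      exact hbR
    linarith
  have hrpow_nonneg : (0 : ℝ) ≤ (n : ℝ) ^ ((3 : ℝ) - 1 / (b : ℝ)) :=
    Real.rpow_nonneg (by positivity) _
  -- rewrite LHS as cast of a natural number
  have hLHS : ∑ c ∈ colorsIn col Finset.univ, ((edgeCount col c : ℝ)) ^ 2
      = ((∑ c ∈ colorsIn col Finset.univ, (edgeCount col c) ^ 2 : ℕ) : ℝ) := by
    push_cast
    try rfl
  rw [hLHS]
  -- total edge count
  have hsym2univ : ((Finset.univ : Finset (Fin n)).sym2.filter (fun e => ¬ e.IsDiag))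
      = ((univ : Finset (Sym2 (Fin n))).filter (fun e => ¬ e.IsDiag)) := by
    ext e
    simp [Finset.mem_sym2_iff]
  have hCIfilter : colorsIn col (Finset.univ)
      = ((univ : Finset (Sym2 (Fin n))).filter (fun e => ¬ e.IsDiag)).image col := by
    unfold colorsIn
    rw [hsym2univ]
  have hedges : ((univ : Finset (Sym2 (Fin n))).filter (fun e => ¬ e.IsDiag)).card
      = n.choose 2 := by
    rw [← hsym2univ, card_sym2_not_isDiag, card_univ, Fintype.card_fin]
  have hsumE : ∑ c ∈ colorsIn col Finset.univ, edgeCount col c = n.choose 2 := by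
    rw [hCIfilter, ← hedges]
    symm
    have := card_eq_sum_card_image col
      ((univ : Finset (Sym2 (Fin n))).filter (fun e => ¬ e.IsDiag))
    rw [this]
    refine Finset.sum_congr rfl (fun c _ => ?_)
    rw [edgeCount, filter_filter]
  -- trivial bound: energy ≤ (n choose 2)^2
  have htriv : ∑ c ∈ colorsIn col Finset.univ, (edgeCount col c) ^ 2
      ≤ (n.choose 2) ^ 2 := by
    rw [← hsumE]
    calc ∑ c ∈ colorsIn col Finset.univ, (edgeCount col c) ^ 2
        ≤ ∑ c ∈ colorsIn col Finset.univ,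
            (edgeCount col c * ∑ c' ∈ colorsIn col Finset.univ, edgeCount col c') := by
          apply sum_le_sum
          intro c hc
          rw [pow_two]
          exact Nat.mul_le_mul_left _ (Finset.single_le_sum (fun _ _ => Nat.zero_le _) hc)
      _ = (∑ c ∈ colorsIn col Finset.univ, edgeCount col c) ^ 2 := by
          rw [← Finset.sum_mul, pow_two]
  -- case n = 0
  rcases Nat.eq_zero_or_pos n with rfl | hn0
  · have : ∑ c ∈ colorsIn col Finset.univ, (edgeCount col c) ^ 2 = 0 := by
      have := htriv
      simpa using this
    rw [this]
    push_cast
    positivity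
  -- now n ≥ 1
  have h1n : (1 : ℝ) ≤ (n : ℝ) := by exact_mod_cast hn0
  have hsq_rpow : ((n : ℝ)) ^ (2 : ℕ) ≤ (n : ℝ) ^ ((3 : ℝ) - 1 / (b : ℝ)) := by
    rw [← Real.rpow_natCast (n : ℝ) 2]
    apply Real.rpow_le_rpow_of_exponent_le h1n
    push_cast
    exact hexp2
  by_cases hnk : n < a * (b + 1)
  · -- small case
    have h1 : ((∑ c ∈ colorsIn col Finset.univ, (edgeCount col c) ^ 2 : ℕ) : ℝ)
        ≤ ((a * (b + 1)) ^ 2 : ℕ) * ((n : ℝ)) ^ (2 : ℕ) := by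
      have hnat : ∑ c ∈ colorsIn col Finset.univ, (edgeCount col c) ^ 2
          ≤ (a * (b + 1)) ^ 2 * n ^ 2 := by
        refine htriv.trans ?_
        have hch : n.choose 2 ≤ a * (b + 1) * n := by
          calc n.choose 2 ≤ n ^ 2 := Nat.choose_le_pow n 2
            _ = n * n := by ring
            _ ≤ (a * (b + 1)) * n := Nat.mul_le_mul_right _ (by omega)
        calc (n.choose 2) ^ 2 ≤ (a * (b + 1) * n) ^ 2 := Nat.pow_le_pow_left hch 2
          _ = (a * (b + 1)) ^ 2 * n ^ 2 := by ring
      exact_mod_cast hnat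
    refine h1.trans ?_
    have h2 : ((a * (b + 1)) ^ 2 : ℕ) ≤ (Cnat : ℝ) := by
      exact_mod_cast (by omega : (a * (b + 1)) ^ 2 ≤ Cnat)
    calc ((a * (b + 1)) ^ 2 : ℕ) * ((n : ℝ)) ^ (2 : ℕ)
        ≤ ((a * (b + 1)) ^ 2 : ℕ) * ((n : ℝ)) ^ ((3 : ℝ) - 1 / (b : ℝ)) := by
          apply mul_le_mul_of_nonneg_left hsq_rpow (by positivity)
      _ ≤ (Cnat : ℝ) * ((n : ℝ)) ^ ((3 : ℝ) - 1 / (b : ℝ)) :=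
          mul_le_mul_of_nonneg_right h2 hrpow_nonneg
  · -- main case : n ≥ a(b+1)
    push_neg at hnk
    have hba : b * a ≤ (a * (b + 1)).choose 2 := by
      have hk6 : 6 ≤ a * (b + 1) := by
        calc 6 = 2 * 3 := rfl
        _ ≤ a * (b + 1) := Nat.mul_le_mul ha (by omega)
      have h1 : b * a ≤ a * (b + 1) := by
        have : b * a = a * b := Nat.mul_comm _ _
        have h2 : a * (b + 1) = a * b + a := by ring
        omega
      refine h1.trans ?_
      rw [Nat.choose_two_right]
      have h3 : a * (b + 1) * 2 ≤ a * (b + 1) * (a * (b + 1) - 1) :=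
        Nat.mul_le_mul_left _ (by omega)
      rw [Nat.le_div_iff_mul_le (by omega)]
      exact h3
    -- max degree bound
    have hM : ∀ v c, cdeg col v c ≤ M := fun v c => maxdeg col hyp hba hnk ha hb v c
    -- claim A in subset form
    have hτ : ∀ Γ : Finset α, Γ.card = b →
        (univ.filter (fun v => Γ ⊆ colAt col v)).card ≤ τ := by
      intro Γ hΓ
      have heq : univ.filter (fun v => Γ ⊆ colAt col v)
          = univ.filter (fun v => ∀ c ∈ Γ, ∃ u, u ≠ v ∧ col s(v, u) = c) := by
        apply filter_congr
        intro v _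
        constructor
        · intro h c hc
          exact (mem_colAt col v c).1 (h hc)
        · intro h c hc
          exact (mem_colAt col v c).2 (h c hc)
      rw [heq]
      exact claimA col hyp hba hnk ha hb Γ hΓ
    -- common-colors sum
    set cc : Fin n × Fin n → ℕ := fun p => (colAt col p.1 ∩ colAt col p.2).card with hccdef
    have hE : ∑ c ∈ colorsIn col Finset.univ, (edgeCount col c) ^ 2
        ≤ M ^ 2 * ∑ p : Fin n × Fin n, cc p := energy_le col M hM _
    -- split the common-colors sum
    have hsplit : ∑ p : Fin n × Fin n, cc p
        ≤ 2 * b * n ^ 2 + ∑ p : Fin n × Fin n, (cc p - 2 * b) := by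
      have hcard : (univ : Finset (Fin n × Fin n)).card = n ^ 2 := by
        rw [card_univ, Fintype.card_prod, Fintype.card_fin]
        ring
      calc ∑ p : Fin n × Fin n, cc p
          ≤ ∑ p : Fin n × Fin n, (2 * b + (cc p - 2 * b)) := by
            apply sum_le_sum
            intro p _
            omega
        _ = 2 * b * n ^ 2 + ∑ p : Fin n × Fin n, (cc p - 2 * b) := by
            rw [Finset.sum_add_distrib, sum_const, hcard, smul_eq_mul, Nat.mul_comm]
    -- bound on ∑ (cc - 2b)^b
    have hgb : ∑ p : Fin n × Fin n, (cc p - 2 * b) ^ b ≤ K1 * n ^ (b + 1) := by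
      calc ∑ p : Fin n × Fin n, (cc p - 2 * b) ^ b
          ≤ ∑ p : Fin n × Fin n, b ^ b * (cc p).choose b := by
            apply sum_le_sum
            intro p _
            exact pow_sub_le_pow_mul_choose (cc p) b (by omega)
        _ = b ^ b * ∑ p : Fin n × Fin n, (cc p).choose b := (Finset.mul_sum _ _ _).symm
        _ ≤ b ^ b * (τ * (n * n ^ b)) :=
            Nat.mul_le_mul_left _ (sum_choose_le col b τ hτ)
        _ = K1 * n ^ (b + 1) := by
            rw [hK1def]
            ring
    -- real power mean
    set G : ℝ := ((∑ p : Fin n × Fin n, (cc p - 2 * b) : ℕ) : ℝ) with hGdef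
    have hGpow : G ^ b ≤ (K1 : ℝ) * (n : ℝ) ^ (3 * b - 1) := by
      have hcardR : ((univ : Finset (Fin n × Fin n)).card : ℝ) = (n : ℝ) ^ 2 := by
        rw [card_univ, Fintype.card_prod, Fintype.card_fin]
        push_cast
        ring
      have hpm := pow_sum_div_card_le_sum_pow
        (s := (univ : Finset (Fin n × Fin n)))
        (f := fun p => ((cc p - 2 * b : ℕ) : ℝ))
        (fun i _ => by positivity) (b - 1)
      rw [hcardR] at hpm
      have hb1 : b - 1 + 1 = b := by omega
      rw [hb1] at hpm
      have hpos : (0 : ℝ) < ((n : ℝ) ^ 2) ^ (b - 1) := by positivity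
      rw [div_le_iff₀ hpos] at hpm
      have hsum1 : (∑ i : Fin n × Fin n, ((cc i - 2 * b : ℕ) : ℝ)) = G := by
        rw [hGdef]
        push_cast
        try rfl
      rw [hsum1] at hpm
      refine hpm.trans ?_
      have hsum2 : (∑ i : Fin n × Fin n, ((cc i - 2 * b : ℕ) : ℝ) ^ b)
          ≤ ((K1 * n ^ (b + 1) : ℕ) : ℝ) := by
        have : (∑ i : Fin n × Fin n, ((cc i - 2 * b : ℕ) : ℝ) ^ b)
            = ((∑ p : Fin n × Fin n, (cc p - 2 * b) ^ b : ℕ) : ℝ) := by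
          push_cast
          try rfl
        rw [this]
        exact_mod_cast hgb
      calc (∑ i : Fin n × Fin n, ((cc i - 2 * b : ℕ) : ℝ) ^ b) * ((n : ℝ) ^ 2) ^ (b - 1)
          ≤ ((K1 * n ^ (b + 1) : ℕ) : ℝ) * ((n : ℝ) ^ 2) ^ (b - 1) := by
            apply mul_le_mul_of_nonneg_right hsum2 (by positivity)
        _ = (K1 : ℝ) * (n : ℝ) ^ (3 * b - 1) := by
            rw [Nat.cast_mul, Nat.cast_pow, ← pow_mul, mul_assoc, ← pow_add]
            congr 2
            omega
    -- extract b-th root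
    have hroot : ((n : ℝ) ^ ((3 : ℝ) - 1 / (b : ℝ))) ^ b = (n : ℝ) ^ (3 * b - 1) := by
      rw [← Real.rpow_natCast ((n : ℝ) ^ ((3 : ℝ) - 1 / (b : ℝ))) b,
        ← Real.rpow_mul (by positivity)]
      have hbe : ((3 : ℝ) - 1 / (b : ℝ)) * (b : ℕ) = ((3 * b - 1 : ℕ) : ℝ) := by
        have hbne : (b : ℝ) ≠ 0 := by positivity
        push_cast [Nat.cast_sub (by omega : 1 ≤ 3 * b)]
        field_simp
        try ring
      rw [hbe, Real.rpow_natCast]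
    have hK1ge1 : (1 : ℝ) ≤ (K1 : ℝ) := by
      have : 1 ≤ K1 := by
        rw [hK1def, hτdef]
        have hbb : 1 ≤ b ^ b := Nat.one_le_pow _ _ (by omega)
        have : 1 ≤ a * (b * M + 1) := Nat.one_le_iff_ne_zero.2 (by positivity)
        exact Nat.one_le_iff_ne_zero.2 (by positivity)
      exact_mod_cast this
    have hG : G ≤ (K1 : ℝ) * (n : ℝ) ^ ((3 : ℝ) - 1 / (b : ℝ)) := by
      have hrhs0 : (0 : ℝ) ≤ (K1 : ℝ) * (n : ℝ) ^ ((3 : ℝ) - 1 / (b : ℝ)) := by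
        positivity
      refine le_of_pow_le_pow_left₀ (by omega : b ≠ 0) hrhs0 ?_
      rw [mul_pow, hroot]
      refine hGpow.trans ?_
      apply mul_le_mul_of_nonneg_right _ (by positivity)
      exact le_self_pow₀ hK1ge1 (by omega)
    -- put everything together
    have hccR : ((∑ p : Fin n × Fin n, cc p : ℕ) : ℝ)
        ≤ ((2 * b : ℕ) : ℝ) * (n : ℝ) ^ (2 : ℕ) + G := by
      have h2 : ((2 * b * n ^ 2 + ∑ p : Fin n × Fin n, (cc p - 2 * b) : ℕ) : ℝ)
          = ((2 * b : ℕ) : ℝ) * (n : ℝ) ^ (2 : ℕ) + G := by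
        rw [hGdef]
        push_cast
        ring
      rw [← h2]
      exact_mod_cast hsplit
    have hP : ((∑ p : Fin n × Fin n, cc p : ℕ) : ℝ)
        ≤ ((2 * b + K1 : ℕ) : ℝ) * (n : ℝ) ^ ((3 : ℝ) - 1 / (b : ℝ)) := by
      refine hccR.trans ?_
      have h3 : ((2 * b : ℕ) : ℝ) * (n : ℝ) ^ (2 : ℕ)
          ≤ ((2 * b : ℕ) : ℝ) * (n : ℝ) ^ ((3 : ℝ) - 1 / (b : ℝ)) :=
        mul_le_mul_of_nonneg_left hsq_rpow (by positivity)
      calc ((2 * b : ℕ) : ℝ) * (n : ℝ) ^ (2 : ℕ) + G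
          ≤ ((2 * b : ℕ) : ℝ) * (n : ℝ) ^ ((3 : ℝ) - 1 / (b : ℝ))
            + (K1 : ℝ) * (n : ℝ) ^ ((3 : ℝ) - 1 / (b : ℝ)) := add_le_add h3 hG
        _ = ((2 * b + K1 : ℕ) : ℝ) * (n : ℝ) ^ ((3 : ℝ) - 1 / (b : ℝ)) := by
            push_cast
            ring
    have hfinal : ((∑ c ∈ colorsIn col Finset.univ, (edgeCount col c) ^ 2 : ℕ) : ℝ)
        ≤ ((M ^ 2 : ℕ) : ℝ) * (((2 * b + K1 : ℕ) : ℝ)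
            * (n : ℝ) ^ ((3 : ℝ) - 1 / (b : ℝ))) := by
      have h4 : ((∑ c ∈ colorsIn col Finset.univ, (edgeCount col c) ^ 2 : ℕ) : ℝ)
          ≤ ((M ^ 2 : ℕ) : ℝ) * ((∑ p : Fin n × Fin n, cc p : ℕ) : ℝ) := by
        exact_mod_cast hE
      refine h4.trans ?_
      exact mul_le_mul_of_nonneg_left hP (by positivity)
    refine hfinal.trans ?_
    rw [← mul_assoc]
    apply mul_le_mul_of_nonneg_right _ hrpow_nonneg
    have h5 : M ^ 2 * (2 * b + K1) ≤ Cnat := by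
      have hMle : M ≤ b * a := by omega
      have : M ^ 2 ≤ (b * a) ^ 2 := Nat.pow_le_pow_left hMle 2
      calc M ^ 2 * (2 * b + K1) ≤ (b * a) ^ 2 * (2 * b + K1) :=
            Nat.mul_le_mul_right _ this
        _ ≤ Cnat := by omega
    exact_mod_cast h5
end
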